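/- Define the Zhelobenko operator R_{km} (for 1 ≤ k < m ≤ n) acting on polynomials in the variables z_{ij} (1 ≤ i < j ≤ n) by R_{km} = ∂/∂z_{km} + ∑_{j > m} z_{mj} ∂/∂z_{kj}. For index sets I = {i_1 < i_2 < ... < i_s} and a determinant Φ formed from rows of an upper unitriangular variable matrix Z (rows indexed by I) together with fixed constant rows, the following hold: (a) R_{kl}Φ = 0 if k ∉ I; (b) R_{kl}Φ = 0 if both k ∈ I and l ∈ I; (c) if k ∈ I and l ∉ I, then R_{kl}Φ = ±Φ' where Φ' is the analogous determinant with row k of Z replaced by row l of Z, with sign (−1)^{t−s} where k = i_s and i_t < l < i_{t+1}. -/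

import Mathlib

open MvPolynomial

/-- Polynomials in the entries `z_{ij}` (1-based indices) of a generic matrix. -/
abbrev Pz : Type := MvPolynomial (ℕ × ℕ) ℂ

/-- The variable `z_{ij}`. -/
noncomputable def zv (i j : ℕ) : Pz := X (i, j)

/-- The `j`-th entry of the `i`-th row (1-based) of the generic upper
unitriangular matrix `Z`: `(0, …, 0, 1, z_{i(i+1)}, …)`. -/
noncomputable def Zrow (i j : ℕ) : Pz :=
  if i = j then 1 else if i < j then zv i j else 0

/-- The Zhelobenko operator `R_{kl} = ∂_{kl} + ∑_{j>l} z_{lj} ∂_{kj}` on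
polynomials in the entries of the generic upper unitriangular `N × N` matrix. -/
noncomputable def Rz (N k l : ℕ) (p : Pz) : Pz :=
  pderiv (k, l) p + ∑ j ∈ Finset.Icc (l + 1) N, zv l j * pderiv (k, j) p

/-- The `N × N` matrix whose first `s` rows are the rows of the generic upper
unitriangular matrix `Z` with (1-based) indices `e 0, …, e (s-1)`, and whose
remaining `t` rows are constant rows `c`. -/
noncomputable def ZconstMat (N s t : ℕ) (hst : s + t = N) (e : Fin s → ℕ)
    (c : Fin t → Fin N → ℂ) : Matrix (Fin N) (Fin N) Pz :=
  Matrix.of fun a b =>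
    if h : (a : ℕ) < s then Zrow (e ⟨a, h⟩) ((b : ℕ) + 1)
    else MvPolynomial.C (c ⟨(a : ℕ) - s, by have := a.isLt; omega⟩ b)

/-! ### Auxiliary lemmas -/

theorem deriv_prod (D : Derivation ℂ Pz Pz) {ι : Type*} [DecidableEq ι] (s : Finset ι)
    (f : ι → Pz) :
    D (∏ i ∈ s, f i) = ∑ i ∈ s, (∏ j ∈ s.erase i, f j) * D (f i) := by
  induction s using Finset.induction_on with
  | empty => simp
  | insert _ _ ha ih =>
    rename_i a s
    rw [Finset.prod_insert ha, Derivation.leibniz, smul_eq_mul, smul_eq_mul, ih,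
      Finset.sum_insert ha, Finset.erase_insert ha, Finset.mul_sum, add_comm]
    congr 1
    apply Finset.sum_congr rfl
    intro i hi
    rw [Finset.erase_insert_of_ne (ne_of_mem_of_not_mem hi ha).symm,
      Finset.prod_insert (fun h => ha (Finset.mem_of_mem_erase h))]
    ring

theorem deriv_det (D : Derivation ℂ Pz Pz) {n : ℕ} (M : Matrix (Fin n) (Fin n) Pz) :
    D M.det = ∑ r, (M.updateRow r (fun j => D (M r j))).det := by
  rw [Matrix.det_apply', map_sum]
  have key : ∀ σ : Equiv.Perm (Fin n),
      D (((Equiv.Perm.sign σ : ℤ) : Pz) * ∏ i, M (σ i) i)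
        = ((Equiv.Perm.sign σ : ℤ) : Pz) *
            ∑ i, (∏ j ∈ Finset.univ.erase i, M (σ j) j) * D (M (σ i) i) := by
    intro σ
    rw [show (((Equiv.Perm.sign σ : ℤ) : Pz) * ∏ i, M (σ i) i)
        = (Equiv.Perm.sign σ : ℤ) • ∏ i, M (σ i) i by rw [zsmul_eq_mul],
      map_zsmul, deriv_prod, zsmul_eq_mul]
  simp_rw [key]
  have rdet : ∀ r : Fin n, (M.updateRow r (fun j => D (M r j))).det
      = ∑ σ : Equiv.Perm (Fin n), ((Equiv.Perm.sign σ : ℤ) : Pz) *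
          ((∏ j ∈ Finset.univ.erase (σ⁻¹ r), M (σ j) j) * D (M r (σ⁻¹ r))) := by
    intro r
    rw [Matrix.det_apply']
    apply Finset.sum_congr rfl
    intro σ _
    congr 1
    rw [← Finset.prod_erase_mul Finset.univ _ (Finset.mem_univ (σ⁻¹ r))]
    congr 1
    · apply Finset.prod_congr rfl
      intro j hj
      have : σ j ≠ r := by
        intro h
        exact (Finset.mem_erase.mp hj).1 (by rw [← h]; simp)
      rw [Matrix.updateRow_ne this]
    · rw [show σ (σ⁻¹ r) = r by simp, Matrix.updateRow_self]
  simp_rw [rdet]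
  rw [Finset.sum_comm]
  apply Finset.sum_congr rfl
  intro σ _
  rw [← Equiv.sum_comp σ (fun r => ((Equiv.Perm.sign σ : ℤ) : Pz) *
      ((∏ j ∈ Finset.univ.erase (σ⁻¹ r), M (σ j) j) * D (M r (σ⁻¹ r)))), Finset.mul_sum]
  simp [Equiv.symm_apply_apply]

/-- The Zhelobenko operator as a derivation. -/
noncomputable def Dz (N k l : ℕ) : Derivation ℂ Pz Pz :=
  pderiv (k, l) + ∑ j ∈ Finset.Icc (l + 1) N, zv l j • pderiv (k, j)

theorem Derivation.sum_apply' {ι : Type*} (s : Finset ι) (Ds : ι → Derivation ℂ Pz Pz)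
    (p : Pz) : (∑ j ∈ s, Ds j) p = ∑ j ∈ s, Ds j p := by
  classical
  induction s using Finset.induction_on with
  | empty => simp
  | insert _ _ ha ih =>
    rename_i a s
    rw [Finset.sum_insert ha, Derivation.add_apply, ih, Finset.sum_insert ha]

theorem Rz_eq_Dz (N k l : ℕ) (p : Pz) : Rz N k l p = Dz N k l p := by
  rw [Rz, Dz, Derivation.add_apply, Derivation.sum_apply']
  simp only [Derivation.smul_apply, smul_eq_mul]

theorem pderiv_Zrow (k j i m : ℕ) :
    pderiv (k, j) (Zrow i m) = if i = k ∧ m = j ∧ i < m then 1 else 0 := by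
  unfold Zrow zv
  split_ifs with h1 h2 h3 h3
  · omega
  · simp
  · rw [show ((i:ℕ),(m:ℕ)) = ((k:ℕ),(j:ℕ)) by rw [h3.1, h3.2.1]]
    simp [pderiv_X_self]
  · rw [pderiv_X_of_ne (by simp; omega)]
  · omega
  · simp

theorem Dz_Zrow_ne (N k l i m : ℕ) (hik : i ≠ k) : Dz N k l (Zrow i m) = 0 := by
  rw [Dz, Derivation.add_apply, Derivation.sum_apply']
  simp only [Derivation.smul_apply, smul_eq_mul, pderiv_Zrow]
  simp [hik]

theorem Dz_Zrow_eq (N k l m : ℕ) (hkl : k < l) (hm : m ≤ N) :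
    Dz N k l (Zrow k m) = Zrow l m := by
  rw [Dz, Derivation.add_apply, Derivation.sum_apply']
  simp only [Derivation.smul_apply, smul_eq_mul, pderiv_Zrow, eq_self_iff_true, true_and]
  have hsum : (∑ j ∈ Finset.Icc (l+1) N, zv l j * (if m = j ∧ k < m then 1 else 0))
      = if l < m ∧ k < m then zv l m else 0 := by
    split_ifs with h
    · rw [Finset.sum_eq_single m (fun j hj hjm => by rw [if_neg (by omega), mul_zero])
        (fun hm' => by simp at hm'; omega)]
      rw [if_pos ⟨rfl, h.2⟩, mul_one]
    · apply Finset.sum_eq_zero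
      intro j hj
      simp only [Finset.mem_Icc] at hj
      rw [if_neg (by omega), mul_zero]
  rw [hsum]
  unfold Zrow zv
  split_ifs <;> first
    | rfl
    | omega
    | simp

theorem Dz_C (N k l : ℕ) (a : ℂ) : Dz N k l (C a) = 0 := by
  rw [Dz, Derivation.add_apply, Derivation.sum_apply']
  simp [pderiv_C]

/-- The index map realising the cyclic move of row `a + d` up to position `a`. -/
def moveIdx {n : ℕ} (a d : ℕ) (h : a + d < n) (i : Fin n) : Fin n :=
  ⟨if (i : ℕ) < a ∨ a + d < (i : ℕ) then (i : ℕ)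
   else if (i : ℕ) = a then a + d else (i : ℕ) - 1,
   by rcases i with ⟨i, hi⟩; dsimp only; split_ifs <;> omega⟩

theorem det_move {n : ℕ} (a d : ℕ) (h : a + d < n) (M : Matrix (Fin n) (Fin n) Pz) :
    (Matrix.of fun (i : Fin n) (j : Fin n) => M (moveIdx a d h i) j).det
      = (-1) ^ d * M.det := by
  induction d generalizing M with
  | zero =>
    rw [pow_zero, one_mul]
    have hMe : ∀ i : Fin n, moveIdx a 0 h i = i := by
      intro ⟨i, hi⟩
      rw [moveIdx, Fin.ext_iff]
      dsimp only
      split_ifs <;> omega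
    congr 1
    apply Matrix.ext
    intro i j
    rw [Matrix.of_apply, hMe]
  | succ d ih =>
    have hd : a + d < n := by omega
    set M' : Matrix (Fin n) (Fin n) Pz :=
      M.submatrix (Equiv.swap ⟨a + d, hd⟩ ⟨a + d + 1, h⟩) id with hM'
    have hdet' : M'.det = - M.det := by
      rw [hM', Matrix.det_permute, Equiv.Perm.sign_swap (by rw [ne_eq, Fin.ext_iff]; simp)]
      simp
    have key : ∀ i : Fin n,
        Equiv.swap ⟨a + d, hd⟩ ⟨a + d + 1, h⟩ (moveIdx a d hd i) = moveIdx a (d + 1) h i := by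
      intro ⟨i, hi⟩
      rw [Equiv.swap_apply_def, moveIdx, moveIdx, Fin.ext_iff]
      simp only [apply_ite (Fin.val : Fin n → ℕ), Fin.mk.injEq]
      split_ifs <;> omega
    have heq : (Matrix.of fun (i : Fin n) (j : Fin n) => M (moveIdx a (d + 1) h i) j)
        = (Matrix.of fun (i : Fin n) (j : Fin n) => M' (moveIdx a d hd i) j) := by
      apply Matrix.ext
      intro i j
      rw [Matrix.of_apply, Matrix.of_apply, hM', Matrix.submatrix_apply, id_eq, key]
    rw [heq, ih hd M', hdet']
    ring

theorem filter_lt_card_iff (s : ℕ) (e : Fin s → ℕ) (he : StrictMono e) (l : ℕ) (a : Fin s) :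
    e a < l ↔ (a : ℕ) < (Finset.univ.filter (fun a : Fin s => e a < l)).card := by
  set F := Finset.univ.filter (fun a : Fin s => e a < l) with hF
  constructor
  · intro h
    have hsub : Finset.Iic a ⊆ F := by
      intro b hb
      simp only [Finset.mem_Iic] at hb
      simp only [hF, Finset.mem_filter, Finset.mem_univ, true_and]
      exact lt_of_le_of_lt (he.monotone hb) h
    have := Finset.card_le_card hsub
    rw [Fin.card_Iic] at this
    omega
  · intro h
    by_contra hc
    have hsub : F ⊆ Finset.Iio a := by
      intro b hb
      simp only [hF, Finset.mem_filter, Finset.mem_univ, true_and] at hb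
      simp only [Finset.mem_Iio]
      by_contra hba
      exact hc (lt_of_le_of_lt (he.monotone (not_lt.mp hba)) hb)
    have := Finset.card_le_card hsub
    rw [Fin.card_Iio] at this
    omega

theorem zhelobenko_on_determinant (N s t : ℕ) (hst : s + t = N)
    (e : Fin s → ℕ) (he : StrictMono e) (hbound : ∀ a, 1 ≤ e a ∧ e a ≤ N)
    (c : Fin t → Fin N → ℂ) (k l : ℕ) (hk : 1 ≤ k) (hkl : k < l) (hl : l ≤ N) :
    ((∀ a, e a ≠ k) → Rz N k l (ZconstMat N s t hst e c).det = 0) ∧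
    ((∃ a, e a = k) → (∃ a, e a = l) →
      Rz N k l (ZconstMat N s t hst e c).det = 0) ∧
    (∀ s₀ : Fin s, e s₀ = k → (∀ a, e a ≠ l) →
      ∀ e' : Fin s → ℕ, StrictMono e' →
        Set.range e' = insert l (Set.range e \ {k}) →
        Rz N k l (ZconstMat N s t hst e c).det =
          (-1 : Pz) ^ ((Finset.univ.filter (fun a : Fin s => e a < l)).card -
              ((s₀ : ℕ) + 1)) *
            (ZconstMat N s t hst e' c).det) := by
  classical
  set M := ZconstMat N s t hst e c with hM
  have hsN : s ≤ N := by omega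
  have hDet : Rz N k l M.det = ∑ r, (M.updateRow r (fun j => Dz N k l (M r j))).det := by
    rw [Rz_eq_Dz, deriv_det]
  have hMentry : ∀ (r : Fin N) (h : (r : ℕ) < s) (j : Fin N),
      M r j = Zrow (e ⟨r, h⟩) ((j : ℕ) + 1) := by
    intro r h j
    simp [hM, ZconstMat, dif_pos h]
  have hzero : ∀ r : Fin N, (∀ h : (r : ℕ) < s, e ⟨r, h⟩ ≠ k) →
      (M.updateRow r (fun j => Dz N k l (M r j))).det = 0 := by
    intro r hr
    apply Matrix.det_eq_zero_of_row_eq_zero r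
    intro j
    rw [Matrix.updateRow_self]
    by_cases h : (r : ℕ) < s
    · rw [hMentry r h j]
      exact Dz_Zrow_ne _ _ _ _ _ (hr h)
    · have : M r j = MvPolynomial.C (c ⟨(r : ℕ) - s, by have := r.isLt; omega⟩ j) := by
        simp [hM, ZconstMat, dif_neg h]
      rw [this, Dz_C]
  have hsingle : ∀ (a : Fin s), e a = k →
      Rz N k l M.det
        = (M.updateRow ⟨(a : ℕ), lt_of_lt_of_le a.isLt hsN⟩
            (fun j => Zrow l ((j : ℕ) + 1))).det := by
    intro a ha
    rw [hDet]
    rw [Finset.sum_eq_single (⟨(a : ℕ), lt_of_lt_of_le a.isLt hsN⟩ : Fin N)]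
    · refine congrArg Matrix.det (congrArg (M.updateRow _) (funext fun j => ?_))
      rw [hMentry ⟨(a : ℕ), lt_of_lt_of_le a.isLt hsN⟩ a.isLt j]
      simp only [Fin.eta]
      rw [ha]
      exact Dz_Zrow_eq N k l _ hkl (by have := j.isLt; omega)
    · intro r _ hne
      apply hzero
      intro h hek
      apply hne
      have hra : (⟨(r : ℕ), h⟩ : Fin s) = a := he.injective (hek.trans ha.symm)
      rw [Fin.ext_iff] at hra ⊢
      simpa using hra
    · intro h
      exact absurd (Finset.mem_univ _) h
  refine ⟨?_, ?_, ?_⟩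
  · -- (a) k ∉ I
    intro hnk
    rw [hDet]
    apply Finset.sum_eq_zero
    intro r _
    exact hzero r (fun h => hnk ⟨r, h⟩)
  · -- (b) k ∈ I and l ∈ I
    rintro ⟨a, ha⟩ ⟨b, hb⟩
    rw [hsingle a ha]
    apply Matrix.det_zero_of_row_eq
      (i := (⟨(b : ℕ), lt_of_lt_of_le b.isLt hsN⟩ : Fin N))
      (j := (⟨(a : ℕ), lt_of_lt_of_le a.isLt hsN⟩ : Fin N))
    · rw [ne_eq, Fin.ext_iff]
      simp only
      intro hba
      have : b = a := Fin.ext hba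
      rw [this, ha] at hb
      omega
    · funext j
      have hne : (⟨(b : ℕ), lt_of_lt_of_le b.isLt hsN⟩ : Fin N)
          ≠ ⟨(a : ℕ), lt_of_lt_of_le a.isLt hsN⟩ := by
        rw [ne_eq, Fin.ext_iff]
        simp only
        intro hba
        have : b = a := Fin.ext hba
        rw [this, ha] at hb
        omega
      rw [Matrix.updateRow_ne hne, Matrix.updateRow_self,
        hMentry _ b.isLt j]
      simp only [Fin.eta]
      rw [hb]
  · -- (c)
    intro s₀ hs₀ hnl e' he' hrange
    set t' := (Finset.univ.filter (fun a : Fin s => e a < l)).card with ht'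
    have hlt : ∀ a : Fin s, e a < l ↔ (a : ℕ) < t' := filter_lt_card_iff s e he l
    have ht1 : (s₀ : ℕ) < t' := (hlt s₀).mp (by rw [hs₀]; exact hkl)
    have ht2 : t' ≤ s := by
      rw [ht']
      calc (Finset.univ.filter (fun a : Fin s => e a < l)).card
          ≤ Finset.univ.card := Finset.card_filter_le _ _
        _ = s := by simp
    have hgt : ∀ a : Fin s, t' ≤ (a : ℕ) → l < e a := by
      intro a hta
      have h1 : ¬ e a < l := fun hh => by have := (hlt a).mp hh; omega
      have h2 := hnl a
      omega
    clear_value t'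
    set p := t' - 1 with hpdef
    clear_value p
    have hps0 : (s₀ : ℕ) ≤ p := by omega
    have hps : p < s := by omega
    have hpn : (s₀ : ℕ) + (p - (s₀ : ℕ)) < N := by omega
    set g : Fin s → ℕ := fun a =>
      if (a : ℕ) < (s₀ : ℕ) then e a
      else if h2 : (a : ℕ) < p then e ⟨(a : ℕ) + 1, by omega⟩
      else if (a : ℕ) = p then l else e a with hg
    have hg1 : ∀ a : Fin s, (a : ℕ) < (s₀ : ℕ) → g a = e a := by
      intro a h
      simp only [hg]
      split_ifs <;> first | rfl | (exfalso; omega)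
    have hg2 : ∀ (a : Fin s) (h1 : ¬ (a : ℕ) < (s₀ : ℕ)) (h2 : (a : ℕ) < p),
        g a = e ⟨(a : ℕ) + 1, by omega⟩ := by
      intro a h1 h2
      simp only [hg]
      split_ifs <;> first | rfl | (exfalso; omega)
    have hg3 : ∀ a : Fin s, (a : ℕ) = p → g a = l := by
      intro a h
      simp only [hg]
      split_ifs <;> first | rfl | (exfalso; omega)
    have hg4 : ∀ a : Fin s, p < (a : ℕ) → g a = e a := by
      intro a h
      simp only [hg]
      split_ifs <;> first | rfl | (exfalso; omega)
    have hmono_g : StrictMono g := by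
      intro a b hab
      have hab' : (a : ℕ) < (b : ℕ) := hab
      by_cases hb1 : (b : ℕ) < (s₀ : ℕ)
      · rw [hg1 a (by omega), hg1 b hb1]
        exact he hab
      · by_cases ha1 : (a : ℕ) < (s₀ : ℕ)
        · rw [hg1 a ha1]
          by_cases hb2 : (b : ℕ) < p
          · rw [hg2 b hb1 hb2]
            exact he (show a < ⟨(b : ℕ) + 1, by omega⟩ by
              rw [Fin.lt_def]; simp; omega)
          · by_cases hb3 : (b : ℕ) = p
            · rw [hg3 b hb3]
              exact (hlt a).mpr (by omega)
            · rw [hg4 b (by omega)]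
              exact he hab
        · by_cases ha2 : (a : ℕ) < p
          · rw [hg2 a ha1 ha2]
            by_cases hb2 : (b : ℕ) < p
            · rw [hg2 b hb1 hb2]
              exact he (show (⟨(a : ℕ) + 1, by omega⟩ : Fin s) < ⟨(b : ℕ) + 1, by omega⟩ by
                rw [Fin.lt_def]; simp; omega)
            · by_cases hb3 : (b : ℕ) = p
              · rw [hg3 b hb3]
                exact (hlt _).mpr (by simp; omega)
              · rw [hg4 b (by omega)]
                exact he (show (⟨(a : ℕ) + 1, by omega⟩ : Fin s) < b by
                  rw [Fin.lt_def]; simp; omega)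
          · by_cases ha3 : (a : ℕ) = p
            · rw [hg3 a ha3, hg4 b (by omega)]
              exact hgt b (by omega)
            · rw [hg4 a (by omega), hg4 b (by omega)]
              exact he hab
    have hrange_g : Set.range g = insert l (Set.range e \ {k}) := by
      ext x
      simp only [Set.mem_range, Set.mem_insert_iff, Set.mem_diff, Set.mem_singleton_iff]
      constructor
      · rintro ⟨a, rfl⟩
        by_cases ha1 : (a : ℕ) < (s₀ : ℕ)
        · rw [hg1 a ha1]
          refine Or.inr ⟨⟨a, rfl⟩, ?_⟩
          intro hak
          have : a = s₀ := he.injective (hak.trans hs₀.symm)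
          omega
        · by_cases ha2 : (a : ℕ) < p
          · rw [hg2 a ha1 ha2]
            refine Or.inr ⟨⟨_, rfl⟩, ?_⟩
            intro hak
            have : (⟨(a : ℕ) + 1, by omega⟩ : Fin s) = s₀ :=
              he.injective (hak.trans hs₀.symm)
            rw [Fin.ext_iff] at this
            simp at this
            omega
          · by_cases ha3 : (a : ℕ) = p
            · rw [hg3 a ha3]
              exact Or.inl rfl
            · rw [hg4 a (by omega)]
              refine Or.inr ⟨⟨a, rfl⟩, ?_⟩
              intro hak
              have : a = s₀ := he.injective (hak.trans hs₀.symm)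
              omega
      · rintro (rfl | ⟨⟨b, rfl⟩, hbk⟩)
        · exact ⟨⟨p, hps⟩, hg3 _ rfl⟩
        · have hbs : b ≠ s₀ := fun h => hbk (h ▸ hs₀)
          by_cases hb1 : (b : ℕ) < (s₀ : ℕ)
          · exact ⟨b, hg1 b hb1⟩
          · have hbgt : (s₀ : ℕ) < (b : ℕ) := by
              rcases lt_or_eq_of_le (not_lt.mp hb1) with h | h
              · exact h
              · exact absurd (Fin.ext h.symm) hbs
            by_cases hb2 : (b : ℕ) ≤ p
            · refine ⟨⟨(b : ℕ) - 1, by omega⟩, ?_⟩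
              rw [hg2 ⟨(b : ℕ) - 1, by omega⟩ (by simp; omega) (by simp; omega)]
              congr 1
              rw [Fin.ext_iff]
              simp
              omega
            · exact ⟨b, hg4 b (by omega)⟩
    have he'g : e' = g := by
      haveI : WellFoundedLT (Fin s) := inferInstance
      have hre : Set.range e' = Set.range g := by rw [hrange, ← hrange_g]
      exact (he'.range_inj hmono_g).mp hre
    have hU : M.updateRow ⟨(s₀ : ℕ), lt_of_lt_of_le s₀.isLt hsN⟩
          (fun j => Zrow l ((j : ℕ) + 1))
        = Matrix.of (fun i j =>
            (ZconstMat N s t hst e' c) (moveIdx (s₀ : ℕ) (p - (s₀ : ℕ)) hpn i) j) := by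
      apply Matrix.ext
      intro i j
      rw [Matrix.of_apply]
      rcases i with ⟨i, hi⟩
      by_cases hi1 : i = (s₀ : ℕ)
      · have : (⟨i, hi⟩ : Fin N) = ⟨(s₀ : ℕ), lt_of_lt_of_le s₀.isLt hsN⟩ :=
          Fin.ext hi1
        rw [this, Matrix.updateRow_self]
        have hmv : moveIdx (s₀ : ℕ) (p - (s₀ : ℕ)) hpn
            (⟨(s₀ : ℕ), lt_of_lt_of_le s₀.isLt hsN⟩ : Fin N) = ⟨p, by omega⟩ := by
          rw [moveIdx, Fin.ext_iff]
          simp only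
          split_ifs <;> omega
        rw [hmv]
        simp only [ZconstMat, Matrix.of_apply, dif_pos hps]
        rw [he'g, hg3 _ (by simp)]
      · have hne : (⟨i, hi⟩ : Fin N) ≠ ⟨(s₀ : ℕ), lt_of_lt_of_le s₀.isLt hsN⟩ := by
          rw [ne_eq, Fin.ext_iff]
          simpa using hi1
        rw [Matrix.updateRow_ne hne]
        by_cases his : i < s
        · rw [hMentry ⟨i, hi⟩ his j]
          by_cases hc1 : i < (s₀ : ℕ)
          · have hmv : moveIdx (s₀ : ℕ) (p - (s₀ : ℕ)) hpn (⟨i, hi⟩ : Fin N)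
                = ⟨i, hi⟩ := by
              rw [moveIdx, Fin.ext_iff]
              simp only
              split_ifs <;> omega
            rw [hmv]
            simp only [ZconstMat, Matrix.of_apply, dif_pos his]
            rw [he'g, hg1 ⟨i, his⟩ (by simpa using hc1)]
          · by_cases hc2 : i ≤ p
            · have hip : (s₀ : ℕ) < i := by omega
              have hmv : moveIdx (s₀ : ℕ) (p - (s₀ : ℕ)) hpn (⟨i, hi⟩ : Fin N)
                  = ⟨i - 1, by omega⟩ := by
                rw [moveIdx, Fin.ext_iff]
                simp only
                split_ifs <;> omega
              rw [hmv]
              simp only [ZconstMat, Matrix.of_apply, dif_pos (show i - 1 < s by omega)]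
              rw [he'g, hg2 ⟨i - 1, by omega⟩ (by simp; omega) (by simp; omega)]
              congr 2
              rw [Fin.ext_iff]
              simp
              omega
            · have hmv : moveIdx (s₀ : ℕ) (p - (s₀ : ℕ)) hpn (⟨i, hi⟩ : Fin N)
                  = ⟨i, hi⟩ := by
                rw [moveIdx, Fin.ext_iff]
                simp only
                split_ifs <;> omega
              rw [hmv]
              simp only [ZconstMat, Matrix.of_apply, dif_pos his]
              rw [he'g, hg4 ⟨i, his⟩ (by simp; omega)]
        · have hmv : moveIdx (s₀ : ℕ) (p - (s₀ : ℕ)) hpn (⟨i, hi⟩ : Fin N)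
              = ⟨i, hi⟩ := by
            rw [moveIdx, Fin.ext_iff]
            simp only
            split_ifs <;> omega
          rw [hmv]
          simp only [hM, ZconstMat, Matrix.of_apply, dif_neg his]
    rw [hsingle s₀ hs₀, hU, det_move]
    rw [show p - (s₀ : ℕ) = t' - ((s₀ : ℕ) + 1) by omega]
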